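/- Let β=(β_n)_{n∈ℕ} be a Cantor base with x_β<+∞, let a be an infinite word over ℕ, and let x∈(x_β−1,x_β]. Then a=ℓ_β(x) if and only if a_n∈[[0,⌈β_n⌉−1]] for all n∈ℕ, val_β(a)=x, and for all ℓ∈ℕ, Σ_{n=ℓ+1}^{+∞} a_n/∏_{k=0}^n β_k > (x_{β^(ℓ+1)}−1)/∏_{k=0}^ℓ β_k. -/

import Mathlib

open Filter Topology

/-- A Cantor real base: a sequence of reals `> 1` whose infinite product diverges to `+∞`. -/
structure IsCantorBase (β : ℕ → ℝ) : Prop where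
  one_lt : ∀ n, 1 < β n
  prod_tendsto : Tendsto (fun N => ∏ i ∈ Finset.range N, β i) atTop atTop

/-- The product `β_0 ⋯ β_n`. -/
noncomputable def prodUpTo (β : ℕ → ℝ) (n : ℕ) : ℝ := ∏ i ∈ Finset.range (n + 1), β i

/-- The shifted base `β^(n) = (β_n, β_{n+1}, …)`. -/
def shiftBase (β : ℕ → ℝ) (n : ℕ) : ℕ → ℝ := fun m => β (n + m)

/-- `x_β = Σ_{n} (⌈β_n⌉ - 1)/(β_0 ⋯ β_n)`. -/
noncomputable def xB (β : ℕ → ℝ) : ℝ := ∑' n, ((⌈β n⌉ : ℝ) - 1) / prodUpTo β n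

/-- The condition `x_β < +∞`, i.e. the series defining `x_β` converges. -/
def XBSummable (β : ℕ → ℝ) : Prop :=
  Summable (fun n => ((⌈β n⌉ : ℝ) - 1) / prodUpTo β n)

/-- `val_β(a) = Σ_n a_n/(β_0 ⋯ β_n)`. -/
noncomputable def valB (β : ℕ → ℝ) (a : ℕ → ℤ) : ℝ := ∑' n, (a n : ℝ) / prodUpTo β n

/-- The digit condition `a_n ∈ [[0, ⌈β_n⌉ - 1]]` for all `n`. -/
def validWord (β : ℕ → ℝ) (a : ℕ → ℤ) : Prop := ∀ n, 0 ≤ a n ∧ a n ≤ ⌈β n⌉ - 1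

/-- The flip map `θ_β`. -/
noncomputable def theta (β : ℕ → ℝ) (a : ℕ → ℤ) : ℕ → ℤ := fun n => ⌈β n⌉ - 1 - a n

/-- The greedy remainders `r_{β,n}(x)`. -/
noncomputable def greedyR (β : ℕ → ℝ) (x : ℝ) : ℕ → ℝ
  | 0 => β 0 * x - (⌊β 0 * x⌋ : ℝ)
  | n + 1 => β (n + 1) * greedyR β x n - (⌊β (n + 1) * greedyR β x n⌋ : ℝ)

/-- The greedy digits `ε_{β,n}(x)`; `greedyDigit β x` is the greedy β-expansion `d_β(x)`. -/
noncomputable def greedyDigit (β : ℕ → ℝ) (x : ℝ) : ℕ → ℤ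
  | 0 => ⌊β 0 * x⌋
  | n + 1 => ⌊β (n + 1) * greedyR β x n⌋

/-- The lazy remainders `s_{β,n}(x)`. -/
noncomputable def lazyS (β : ℕ → ℝ) (x : ℝ) : ℕ → ℝ
  | 0 => β 0 * x - (⌈β 0 * x - xB (shiftBase β 1)⌉ : ℝ)
  | n + 1 => β (n + 1) * lazyS β x n -
      (⌈β (n + 1) * lazyS β x n - xB (shiftBase β (n + 2))⌉ : ℝ)

/-- The lazy digits `ξ_{β,n}(x)`; `lazyDigit β x` is the lazy β-expansion `ℓ_β(x)`. -/
noncomputable def lazyDigit (β : ℕ → ℝ) (x : ℝ) : ℕ → ℤ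
  | 0 => ⌈β 0 * x - xB (shiftBase β 1)⌉
  | n + 1 => ⌈β (n + 1) * lazyS β x n - xB (shiftBase β (n + 2))⌉

/-- Strict lexicographic order on infinite words. -/
def lexLt (a b : ℕ → ℤ) : Prop := ∃ k, (∀ i < k, a i = b i) ∧ a k < b k

/-- Lexicographic order on infinite words. -/
def lexLe (a b : ℕ → ℤ) : Prop := lexLt a b ∨ a = b

/-- `D_β`, the set of greedy β-expansions of points of `[0,1)`. -/
def greedySet (β : ℕ → ℝ) : Set (ℕ → ℤ) :=
  {a | ∃ x ∈ Set.Ico (0 : ℝ) 1, a = greedyDigit β x}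

/-- `D'_β`, the set of lazy β-expansions of points of `(x_β - 1, x_β]`. -/
def lazySet (β : ℕ → ℝ) : Set (ℕ → ℤ) :=
  {a | ∃ x ∈ Set.Ioc (xB β - 1) (xB β), a = lazyDigit β x}

/-- `Δ'_β = ⋃_n D'_{β^(n)}`. -/
def deltaSet (β : ℕ → ℝ) : Set (ℕ → ℤ) := ⋃ n, lazySet (shiftBase β n)


/-! ### Auxiliary lemmas -/

/-- Abbreviation for the terms of the series defining `x_β`. -/
noncomputable def cterm (β : ℕ → ℝ) (n : ℕ) : ℝ := ((⌈β n⌉ : ℝ) - 1) / prodUpTo β n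

lemma prodUpTo_pos {β : ℕ → ℝ} (hb : ∀ n, 1 < β n) (n : ℕ) : 0 < prodUpTo β n :=
  Finset.prod_pos fun i _ => lt_trans one_pos (hb i)

lemma prodUpTo_succ (β : ℕ → ℝ) (n : ℕ) : prodUpTo β (n + 1) = prodUpTo β n * β (n + 1) :=
  Finset.prod_range_succ _ _

lemma prodUpTo_zero (β : ℕ → ℝ) : prodUpTo β 0 = β 0 := by
  simp [prodUpTo]

lemma shiftBase_zero (β : ℕ → ℝ) : shiftBase β 0 = β := by
  funext m; simp [shiftBase]

lemma shiftBase_shift (β : ℕ → ℝ) (n : ℕ) :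
    shiftBase (shiftBase β n) 1 = shiftBase β (n + 1) := by
  funext m; simp only [shiftBase]; congr 1; omega

lemma prodUpTo_shift (β : ℕ → ℝ) (n m : ℕ) :
    prodUpTo β (n + 1 + m) = prodUpTo β n * prodUpTo (shiftBase β (n + 1)) m := by
  simp only [prodUpTo, shiftBase]
  rw [show n + 1 + m + 1 = (n + 1) + (m + 1) by omega, Finset.prod_range_add]

lemma cterm_shift {β : ℕ → ℝ} (hb : ∀ n, 1 < β n) (n m : ℕ) :
    cterm (shiftBase β (n + 1)) m = prodUpTo β n * cterm β (n + 1 + m) := by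
  have h0 : (0:ℝ) < prodUpTo β n := prodUpTo_pos hb n
  have h1 : (0:ℝ) < prodUpTo (shiftBase β (n + 1)) m := prodUpTo_pos (fun k => hb _) m
  simp only [cterm, prodUpTo_shift β n m, shiftBase]
  field_simp

lemma summable_cterm_shift {β : ℕ → ℝ} (hb : ∀ n, 1 < β n) (hx : XBSummable β) (n : ℕ) :
    Summable (cterm (shiftBase β n)) := by
  cases n with
  | zero => rw [shiftBase_zero]; exact hx
  | succ n =>
    have h1 : Summable (fun m => cterm β (m + (n + 1))) := (summable_nat_add_iff (n + 1)).2 hx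
    have h2 : Summable (fun m => prodUpTo β n * cterm β (n + 1 + m)) := by
      apply (h1.mul_left (prodUpTo β n)).congr
      intro m
      rw [show n + 1 + m = m + (n + 1) by omega]
    exact h2.congr fun m => (cterm_shift hb n m).symm

lemma xB_tail {β : ℕ → ℝ} (hb : ∀ n, 1 < β n) (hx : XBSummable β) (n : ℕ) :
    xB (shiftBase β (n + 1)) = prodUpTo β n * ∑' m, cterm β (m + (n + 1)) := by
  calc xB (shiftBase β (n + 1)) = ∑' m, cterm (shiftBase β (n + 1)) m := rfl
    _ = ∑' m, prodUpTo β n * cterm β (n + 1 + m) := tsum_congr fun m => cterm_shift hb n m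
    _ = prodUpTo β n * ∑' m, cterm β (n + 1 + m) := tsum_mul_left
    _ = prodUpTo β n * ∑' m, cterm β (m + (n + 1)) := by
        congr 1
        exact tsum_congr fun m => by rw [show n + 1 + m = m + (n + 1) by omega]

lemma xB_nonneg {β : ℕ → ℝ} (hb : ∀ n, 1 < β n) : 0 ≤ xB β := by
  apply tsum_nonneg
  intro n
  apply div_nonneg _ (prodUpTo_pos hb n).le
  have h1 := Int.le_ceil (β n)
  have h2 := hb n
  linarith

lemma xB_rec' {γ : ℕ → ℝ} (hb : ∀ n, 1 < γ n) (hx : XBSummable γ) :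
    γ 0 * xB γ = ((⌈γ 0⌉ : ℝ) - 1) + xB (shiftBase γ 1) := by
  have h0 : (0:ℝ) < γ 0 := lt_trans one_pos (hb 0)
  have hxs : Summable (cterm γ) := hx
  have hsplit : xB γ = cterm γ 0 + ∑' m, cterm γ (m + 1) := Summable.tsum_eq_zero_add hxs
  have htail : xB (shiftBase γ 1) = prodUpTo γ 0 * ∑' m, cterm γ (m + 1) := xB_tail hb hx 0
  have hc0 : cterm γ 0 = ((⌈γ 0⌉ : ℝ) - 1) / γ 0 := by rw [cterm, prodUpTo_zero]
  rw [hsplit, htail, prodUpTo_zero, hc0]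
  field_simp

lemma xB_rec {β : ℕ → ℝ} (hb : ∀ n, 1 < β n) (hx : XBSummable β) (n : ℕ) :
    β n * xB (shiftBase β n) = ((⌈β n⌉ : ℝ) - 1) + xB (shiftBase β (n + 1)) := by
  have h := xB_rec' (γ := shiftBase β n) (fun m => hb _) (summable_cterm_shift hb hx n)
  rw [shiftBase_shift] at h
  simpa [shiftBase] using h

lemma digit_bound {β : ℕ → ℝ} (hb : ∀ n, 1 < β n) (hx : XBSummable β) (n : ℕ) {t : ℝ}
    (ht1 : xB (shiftBase β n) - 1 < t) (ht2 : t ≤ xB (shiftBase β n)) :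
    0 ≤ ⌈β n * t - xB (shiftBase β (n + 1))⌉ ∧
      ⌈β n * t - xB (shiftBase β (n + 1))⌉ ≤ ⌈β n⌉ - 1 := by
  have hrec := xB_rec hb hx n
  have h0 : (0:ℝ) < β n := lt_trans one_pos (hb n)
  have hceil : β n ≤ (⌈β n⌉ : ℝ) := Int.le_ceil _
  constructor
  · have hlt : (-1 : ℝ) < β n * t - xB (shiftBase β (n + 1)) := by
      nlinarith [mul_lt_mul_of_pos_left ht1 h0]
    have h2 : ((-1 : ℤ) : ℝ) < β n * t - xB (shiftBase β (n + 1)) := by exact_mod_cast hlt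
    have := Int.lt_ceil.2 h2
    omega
  · apply Int.ceil_le.2
    push_cast
    nlinarith [mul_le_mul_of_nonneg_left ht2 h0.le]

lemma sub_ceil_mem (y c : ℝ) : c - 1 < y - (⌈y - c⌉ : ℝ) ∧ y - (⌈y - c⌉ : ℝ) ≤ c := by
  have h1 := Int.ceil_lt_add_one (y - c)
  have h2 := Int.le_ceil (y - c)
  constructor <;> linarith

lemma lazyS_mem (β : ℕ → ℝ) (x : ℝ) (n : ℕ) :
    xB (shiftBase β (n + 1)) - 1 < lazyS β x n ∧ lazyS β x n ≤ xB (shiftBase β (n + 1)) := by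
  cases n with
  | zero => simpa only [lazyS] using sub_ceil_mem (β 0 * x) (xB (shiftBase β 1))
  | succ n =>
    simpa only [lazyS] using
      sub_ceil_mem (β (n + 1) * lazyS β x n) (xB (shiftBase β (n + 2)))

lemma lazyS_zero (β : ℕ → ℝ) (x : ℝ) :
    lazyS β x 0 = β 0 * x - (lazyDigit β x 0 : ℝ) := by
  simp [lazyS, lazyDigit]

lemma lazyS_succ (β : ℕ → ℝ) (x : ℝ) (n : ℕ) :
    lazyS β x (n + 1) = β (n + 1) * lazyS β x n - (lazyDigit β x (n + 1) : ℝ) := by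
  simp [lazyS, lazyDigit]

lemma lazy_valid {β : ℕ → ℝ} (hb : ∀ n, 1 < β n) (hx : XBSummable β) {x : ℝ}
    (hmem : x ∈ Set.Ioc (xB β - 1) (xB β)) : validWord β (lazyDigit β x) := by
  intro n
  cases n with
  | zero =>
    have h := digit_bound hb hx 0 (t := x) ?_ ?_
    · simpa only [lazyDigit] using h
    · rw [shiftBase_zero]; exact hmem.1
    · rw [shiftBase_zero]; exact hmem.2
  | succ n =>
    have h := digit_bound hb hx (n + 1) (t := lazyS β x n) (lazyS_mem β x n).1 (lazyS_mem β x n).2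
    simpa only [lazyDigit] using h

lemma lazy_partial {β : ℕ → ℝ} (hb : ∀ n, 1 < β n) (x : ℝ) (n : ℕ) :
    x = (∑ k ∈ Finset.range (n + 1), (lazyDigit β x k : ℝ) / prodUpTo β k)
      + lazyS β x n / prodUpTo β n := by
  induction n with
  | zero =>
    have hb0 : β 0 ≠ 0 := (lt_trans one_pos (hb 0)).ne'
    rw [Finset.sum_range_one, lazyS_zero, prodUpTo_zero]
    field_simp
    ring
  | succ n ih =>
    have hpos : prodUpTo β n ≠ 0 := (prodUpTo_pos hb n).ne'
    have hb1 : β (n + 1) ≠ 0 := (lt_trans one_pos (hb (n + 1))).ne'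
    have key : lazyS β x n / prodUpTo β n
        = (lazyDigit β x (n + 1) : ℝ) / prodUpTo β (n + 1)
          + lazyS β x (n + 1) / prodUpTo β (n + 1) := by
      rw [lazyS_succ, prodUpTo_succ]
      field_simp
      ring
    rw [Finset.sum_range_succ]
    linarith [ih, key]

lemma summable_word {β : ℕ → ℝ} (hb : ∀ n, 1 < β n) (hx : XBSummable β) {a : ℕ → ℤ}
    (ha : validWord β a) : Summable (fun n => (a n : ℝ) / prodUpTo β n) := by
  apply Summable.of_nonneg_of_le _ _ hx
  · intro n
    exact div_nonneg (by exact_mod_cast (ha n).1) (prodUpTo_pos hb n).le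
  · intro n
    have h : (a n : ℝ) ≤ (⌈β n⌉ : ℝ) - 1 := by
      have := (ha n).2
      push_cast
      exact_mod_cast this
    exact (div_le_div_iff_of_pos_right (prodUpTo_pos hb n)).2 h

lemma prodUpTo_tendsto {β : ℕ → ℝ} (hβ : IsCantorBase β) :
    Tendsto (fun n => prodUpTo β n) atTop atTop :=
  hβ.prod_tendsto.comp (tendsto_add_atTop_nat 1)

lemma lazy_remainder_tendsto {β : ℕ → ℝ} (hβ : IsCantorBase β) (hx : XBSummable β) (x : ℝ) :
    Tendsto (fun n => lazyS β x n / prodUpTo β n) atTop (𝓝 0) := by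
  have hb := hβ.one_lt
  have hupper : ∀ n, lazyS β x n / prodUpTo β n ≤ ∑' m, cterm β (m + (n + 1)) := by
    intro n
    have h1 := (lazyS_mem β x n).2
    have h2 := xB_tail hb hx n
    have hp := prodUpTo_pos hb n
    rw [div_le_iff₀ hp]
    calc lazyS β x n ≤ xB (shiftBase β (n + 1)) := h1
      _ = prodUpTo β n * ∑' m, cterm β (m + (n + 1)) := h2
      _ = (∑' m, cterm β (m + (n + 1))) * prodUpTo β n := mul_comm _ _
  have hlower : ∀ n, -(prodUpTo β n)⁻¹ ≤ lazyS β x n / prodUpTo β n := by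
    intro n
    have h1 := (lazyS_mem β x n).1
    have h2 : (0:ℝ) ≤ xB (shiftBase β (n + 1)) := xB_nonneg fun m => hb _
    have hp := prodUpTo_pos hb n
    have hs : (-1 : ℝ) ≤ lazyS β x n := by linarith
    calc -(prodUpTo β n)⁻¹ = (-1) / prodUpTo β n := by ring
      _ ≤ lazyS β x n / prodUpTo β n := (div_le_div_iff_of_pos_right hp).2 hs
  have htendu : Tendsto (fun n => ∑' m, cterm β (m + (n + 1))) atTop (𝓝 0) :=
    (tendsto_sum_nat_add (cterm β)).comp (tendsto_add_atTop_nat 1)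
  have htendl : Tendsto (fun n => -(prodUpTo β n)⁻¹) atTop (𝓝 0) := by
    have h := (prodUpTo_tendsto hβ).inv_tendsto_atTop
    have := h.neg
    simpa using this
  exact tendsto_of_tendsto_of_tendsto_of_le_of_le htendl htendu hlower hupper

lemma lazy_hasSum {β : ℕ → ℝ} (hβ : IsCantorBase β) (hx : XBSummable β) {x : ℝ}
    (hmem : x ∈ Set.Ioc (xB β - 1) (xB β)) :
    HasSum (fun k => (lazyDigit β x k : ℝ) / prodUpTo β k) x := by
  have hb := hβ.one_lt
  have hsummable : Summable (fun k => (lazyDigit β x k : ℝ) / prodUpTo β k) :=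
    summable_word hb hx (lazy_valid hb hx hmem)
  have h2 : Tendsto (fun n => ∑ k ∈ Finset.range (n + 1), (lazyDigit β x k : ℝ) / prodUpTo β k)
      atTop (𝓝 (∑' k, (lazyDigit β x k : ℝ) / prodUpTo β k)) :=
    hsummable.hasSum.tendsto_sum_nat.comp (tendsto_add_atTop_nat 1)
  have h1 : Tendsto (fun n => ∑ k ∈ Finset.range (n + 1), (lazyDigit β x k : ℝ) / prodUpTo β k)
      atTop (𝓝 x) := by
    have heq : (fun n => ∑ k ∈ Finset.range (n + 1), (lazyDigit β x k : ℝ) / prodUpTo β k)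
        = fun n => x - lazyS β x n / prodUpTo β n := by
      funext n
      have := lazy_partial hb x n
      linarith
    rw [heq]
    have := (tendsto_const_nhds (x := x) (f := atTop (α := ℕ))).sub
        (lazy_remainder_tendsto hβ hx x)
    simpa using this
  have : (∑' k, (lazyDigit β x k : ℝ) / prodUpTo β k) = x := tendsto_nhds_unique h2 h1
  have h4 := hsummable.hasSum
  rwa [this] at h4

lemma lazy_tail_eq {β : ℕ → ℝ} (hβ : IsCantorBase β) (hx : XBSummable β) {x : ℝ}
    (hmem : x ∈ Set.Ioc (xB β - 1) (xB β)) (l : ℕ) :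
    (∑' m, (lazyDigit β x (m + l + 1) : ℝ) / prodUpTo β (m + l + 1))
      = lazyS β x l / prodUpTo β l := by
  have hb := hβ.one_lt
  have hsummable : Summable (fun k => (lazyDigit β x k : ℝ) / prodUpTo β k) :=
    summable_word hb hx (lazy_valid hb hx hmem)
  have h1 := Summable.sum_add_tsum_nat_add (f := fun k => (lazyDigit β x k : ℝ) / prodUpTo β k)
      (l + 1) hsummable
  have h2 := (lazy_hasSum hβ hx hmem).tsum_eq
  have h3 := lazy_partial hb x l
  rw [h2] at h1
  -- h1 : ∑ range (l+1) + ∑' m, f (m + (l+1)) = x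
  have : (∑' m, (lazyDigit β x (m + (l + 1)) : ℝ) / prodUpTo β (m + (l + 1)))
      = lazyS β x l / prodUpTo β l := by linarith
  exact this

lemma ceil_step {c : ℝ} (ak : ℤ) {u y : ℝ} (hy : y = (ak : ℝ) + u)
    (h1 : c - 1 < u) (h2 : u ≤ c) : ⌈y - c⌉ = ak := by
  rw [Int.ceil_eq_iff]
  constructor
  · linarith
  · linarith

lemma tail_rec {β : ℕ → ℝ} {a : ℕ → ℤ}
    (hsa : Summable (fun m => (a m : ℝ) / prodUpTo β m)) (n : ℕ) :
    (∑' m : ℕ, (a (m + n) : ℝ) / prodUpTo β (m + n))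
      = (a n : ℝ) / prodUpTo β n
        + ∑' m : ℕ, (a (m + n + 1) : ℝ) / prodUpTo β (m + n + 1) := by
  have h := Summable.tsum_eq_zero_add ((summable_nat_add_iff n).2 hsa)
  simp only [Nat.zero_add] at h
  rw [h]
  congr 1
  exact tsum_congr fun m => by rw [show m + 1 + n = m + n + 1 by omega]

lemma tail_le {β : ℕ → ℝ} (hb : ∀ n, 1 < β n) (hx : XBSummable β) {a : ℕ → ℤ}
    (hvalid : validWord β a) (n : ℕ) :
    prodUpTo β n * (∑' m : ℕ, (a (m + n + 1) : ℝ) / prodUpTo β (m + n + 1))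
      ≤ xB (shiftBase β (n + 1)) := by
  have hsa : Summable (fun m => (a m : ℝ) / prodUpTo β m) := summable_word hb hx hvalid
  have h1 : (∑' m : ℕ, (a (m + n + 1) : ℝ) / prodUpTo β (m + n + 1))
      ≤ ∑' m : ℕ, cterm β (m + (n + 1)) := by
    have hs1 : Summable (fun m : ℕ => (a (m + n + 1) : ℝ) / prodUpTo β (m + n + 1)) :=
      (summable_nat_add_iff (f := fun j => (a j : ℝ) / prodUpTo β j) (n + 1)).2 hsa
    have hs2 : Summable (fun m : ℕ => cterm β (m + (n + 1))) :=
      (summable_nat_add_iff (f := cterm β) (n + 1)).2 hx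
    apply Summable.tsum_le_tsum _ hs1 hs2
    intro m
    simp only [cterm]
    have h := (hvalid (m + n + 1)).2
    have h' : (a (m + n + 1) : ℝ) ≤ (⌈β (m + n + 1)⌉ : ℝ) - 1 := by exact_mod_cast h
    exact (div_le_div_iff_of_pos_right (prodUpTo_pos hb _)).2 h'
  calc prodUpTo β n * (∑' m : ℕ, (a (m + n + 1) : ℝ) / prodUpTo β (m + n + 1))
      ≤ prodUpTo β n * ∑' m : ℕ, cterm β (m + (n + 1)) :=
        mul_le_mul_of_nonneg_left h1 (prodUpTo_pos hb n).le
    _ = xB (shiftBase β (n + 1)) := (xB_tail hb hx n).symm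

lemma converse_aux {β : ℕ → ℝ} (hβ : IsCantorBase β) (hx : XBSummable β)
    {a : ℕ → ℤ} {x : ℝ}
    (hvalid : validWord β a) (hval : valB β a = x)
    (htail : ∀ l : ℕ, (∑' n : ℕ, (a (n + l + 1) : ℝ) / prodUpTo β (n + l + 1)) >
        (xB (shiftBase β (l + 1)) - 1) / prodUpTo β l) :
    ∀ n, a n = lazyDigit β x n ∧
      lazyS β x n = prodUpTo β n * ∑' m : ℕ, (a (m + n + 1) : ℝ) / prodUpTo β (m + n + 1) := by
  have hb := hβ.one_lt
  have hsa : Summable (fun m => (a m : ℝ) / prodUpTo β m) := summable_word hb hx hvalid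
  have hupper : ∀ n, prodUpTo β n * (∑' m : ℕ, (a (m + n + 1) : ℝ) / prodUpTo β (m + n + 1))
      ≤ xB (shiftBase β (n + 1)) := fun n => tail_le hb hx hvalid n
  have hlowr : ∀ n, xB (shiftBase β (n + 1)) - 1
      < prodUpTo β n * (∑' m : ℕ, (a (m + n + 1) : ℝ) / prodUpTo β (m + n + 1)) := by
    intro n
    have h := htail n
    rw [gt_iff_lt, div_lt_iff₀ (prodUpTo_pos hb n)] at h
    rw [mul_comm]
    exact h
  have hx0 : β 0 * x = (a 0 : ℝ)
      + prodUpTo β 0 * ∑' m : ℕ, (a (m + 0 + 1) : ℝ) / prodUpTo β (m + 0 + 1) := by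
    have h00 : (∑' m : ℕ, (a (m + 0) : ℝ) / prodUpTo β (m + 0)) = x := hval
    have h := tail_rec hsa 0
    rw [h00] at h
    rw [prodUpTo_zero] at h ⊢
    have hb0 : β 0 ≠ 0 := (lt_trans one_pos (hb 0)).ne'
    rw [h]
    field_simp
  have hstep : ∀ n, β (n + 1) *
        (prodUpTo β n * ∑' m : ℕ, (a (m + n + 1) : ℝ) / prodUpTo β (m + n + 1))
      = (a (n + 1) : ℝ)
        + prodUpTo β (n + 1) * ∑' m : ℕ, (a (m + (n + 1) + 1) : ℝ) / prodUpTo β (m + (n + 1) + 1) := by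
    intro n
    have h := tail_rec hsa (n + 1)
    have hpn : prodUpTo β n ≠ 0 := (prodUpTo_pos hb n).ne'
    have hb1 : β (n + 1) ≠ 0 := (lt_trans one_pos (hb (n + 1))).ne'
    have hheq : (∑' m : ℕ, (a (m + (n + 1)) : ℝ) / prodUpTo β (m + (n + 1)))
        = ∑' m : ℕ, (a (m + n + 1) : ℝ) / prodUpTo β (m + n + 1) := rfl
    rw [hheq] at h
    rw [h, prodUpTo_succ]
    field_simp
  intro n
  induction n with
  | zero =>
    have hd : ⌈β 0 * x - xB (shiftBase β (0 + 1))⌉ = a 0 :=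
      ceil_step (a 0) hx0 (hlowr 0) (hupper 0)
    have hd' : lazyDigit β x 0 = a 0 := hd
    refine ⟨hd'.symm, ?_⟩
    rw [lazyS_zero, hd']
    linarith [hx0]
  | succ n ih =>
    have hstepn := hstep n
    rw [← ih.2] at hstepn
    have hd : ⌈β (n + 1) * lazyS β x n - xB (shiftBase β (n + 1 + 1))⌉ = a (n + 1) :=
      ceil_step (a (n + 1)) hstepn (hlowr (n + 1)) (hupper (n + 1))
    have hd' : lazyDigit β x (n + 1) = a (n + 1) := hd
    refine ⟨hd'.symm, ?_⟩
    rw [lazyS_succ, hd']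
    linarith [hstepn]

/-- characterization of the lazy β-expansion of `x ∈ (x_β−1, x_β]`. -/
theorem lazy_iff (β : ℕ → ℝ) (hβ : IsCantorBase β) (hx : XBSummable β)
    (a : ℕ → ℤ) (x : ℝ) (hmem : x ∈ Set.Ioc (xB β - 1) (xB β)) :
    a = lazyDigit β x ↔
      validWord β a ∧ valB β a = x ∧
      ∀ l : ℕ, (∑' n : ℕ, (a (n + l + 1) : ℝ) / prodUpTo β (n + l + 1)) >
        (xB (shiftBase β (l + 1)) - 1) / prodUpTo β l := by
  have hb := hβ.one_lt
  constructor
  · rintro rfl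
    refine ⟨lazy_valid hb hx hmem, (lazy_hasSum hβ hx hmem).tsum_eq, ?_⟩
    intro l
    have h1 := lazy_tail_eq hβ hx hmem l
    rw [gt_iff_lt, h1]
    exact (div_lt_div_iff_of_pos_right (prodUpTo_pos hb l)).2 (lazyS_mem β x l).1
  · rintro ⟨hvalid, hval, htail⟩
    funext n
    exact (converse_aux hβ hx hvalid hval htail n).1
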